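/- arXiv:2409.07795 — 6 statements merged into one kernel-verified Lean document; each statement's English description precedes it below -/
import Mathlib

section
/- Let f_X, f_C, f̃_X, f̃_C be probability densities on ℝ with survival functions S_X, S_C, S̃_X, S̃_C, all survival functions strictly positive. Suppose (i) f_X(x) S_C(x) = f̃_X(x) S̃_C(x) for all x, (ii) S_X(c) f_C(c) = S̃_X(c) f̃_C(c) for all c, and (iii) S_X(t) S_C(t) = S̃_X(t) S̃_C(t) for all t. Then f_X = f̃_X and f_C = f̃_C. -/
open MeasureTheory Set Filter Topology

private lemma censor_surv_eq (f g : ℝ → ℝ)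
    (hf : Integrable f) (hf0 : ∀ x, 0 ≤ f x) (hf1 : ∫ x, f x = 1)
    (hg : Integrable g) (hg0 : ∀ x, 0 ≤ g x) (hg1 : ∫ x, g x = 1)
    (hT : ∀ t, 0 < ∫ x in Ioi t, g x)
    (h4 : ∀ x, f x * (∫ y in Ioi x, g y) = g x * (∫ y in Ioi x, f y)) :
    ∀ t, (∫ x in Ioi t, f x) = ∫ x in Ioi t, g x := by
  set S : ℝ → ℝ := fun t => ∫ x in Ioi t, f x with hSdef
  set T : ℝ → ℝ := fun t => ∫ x in Ioi t, g x with hTdef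
  set U : ℝ → ℝ := fun t => ∫ x in Iic t, g x with hUdef
  set ψ : ℝ → ℝ := fun t => S t - T t with hψdef
  have hSnn : ∀ t, 0 ≤ S t := fun t =>
    setIntegral_nonneg measurableSet_Ioi fun x _ => hf0 x
  have hTnn : ∀ t, 0 ≤ T t := fun t =>
    setIntegral_nonneg measurableSet_Ioi fun x _ => hg0 x
  have hUnn : ∀ t, 0 ≤ U t := fun t =>
    setIntegral_nonneg measurableSet_Iic fun x _ => hg0 x
  have hSle : ∀ t, S t ≤ 1 := fun t => by
    rw [← hf1]; exact setIntegral_le_integral hf (ae_of_all _ hf0)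
  have hTle : ∀ t, T t ≤ 1 := fun t => by
    rw [← hg1]; exact setIntegral_le_integral hg (ae_of_all _ hg0)
  have hψ_abs : ∀ t, |ψ t| ≤ 1 := fun t =>
    abs_sub_le_iff.2 ⟨by have := hSle t; have := hTnn t; linarith,
      by have := hTle t; have := hSnn t; linarith⟩
  -- T is antitone, U is monotone
  have hT_anti : ∀ x t : ℝ, x ≤ t → T t ≤ T x := fun x t hxt =>
    setIntegral_mono_set hg.integrableOn (ae_of_all _ hg0)
      (HasSubset.Subset.eventuallyLE (Ioi_subset_Ioi hxt))
  have hU_mono : ∀ x t : ℝ, x ≤ t → U x ≤ U t := fun x t hxt =>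
    setIntegral_mono_set hg.integrableOn (ae_of_all _ hg0)
      (HasSubset.Subset.eventuallyLE (Iic_subset_Iic.2 hxt))
  -- relation between Iic integral and S, T
  have hsplitf : ∀ t, (∫ x in Iic t, f x) + S t = 1 := fun t => by
    rw [← hf1]; exact intervalIntegral.integral_Iic_add_Ioi hf.integrableOn hf.integrableOn
  have hsplitg : ∀ t, U t + T t = 1 := fun t => by
    rw [← hg1]; exact intervalIntegral.integral_Iic_add_Ioi hg.integrableOn hg.integrableOn
  have hd_int : Integrable (fun x => g x - f x) := hg.sub hf
  have hψ_Iic : ∀ t, ψ t = ∫ x in Iic t, (g x - f x) := fun t => by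
    have h := hsplitf t
    have h' := hsplitg t
    rw [integral_sub hg.integrableOn hf.integrableOn]
    simp only [hψdef]
    have : (∫ x in Iic t, g x) = U t := rfl
    linarith [h, h']
  -- pointwise identity
  have hd_pt : ∀ x, |g x - f x| * T x = g x * |ψ x| := fun x => by
    have h : (g x - f x) * T x = g x * (-ψ x) := by
      have := h4 x
      simp only [hψdef, hSdef, hTdef] at *
      ring_nf
      nlinarith [this]
    have habs : |(g x - f x) * T x| = |g x * (-ψ x)| := by rw [h]
    rwa [abs_mul, abs_mul, abs_of_nonneg (hTnn x), abs_of_nonneg (hg0 x), abs_neg] at habs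
  -- base case: ψ vanishes on Iic a provided U a < T a
  have hbase : ∀ a : ℝ, U a < T a → ∀ s, s ≤ a → ψ s = 0 := by
    intro a hq s hs
    set q : ℝ := U a / T a with hqdef
    have hTa := hT a
    have hq0 : 0 ≤ q := div_nonneg (hUnn a) hTa.le
    have hq1 : q < 1 := (div_lt_one hTa).2 hq
    have hind : ∀ n : ℕ, ∀ s, s ≤ a → |ψ s| ≤ q ^ n := by
      intro n
      induction n with
      | zero => intro s _; simpa using hψ_abs s
      | succ n ih =>
        intro s hs
        have h1 : |ψ s| ≤ ∫ x in Iic s, |g x - f x| := by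
          rw [hψ_Iic s]
          simpa [Real.norm_eq_abs] using
            norm_integral_le_integral_norm (μ := volume.restrict (Iic s)) (fun x => g x - f x)
        have h2 : ∫ x in Iic s, |g x - f x| ≤ ∫ x in Iic s, (q ^ n / T a) * g x := by
          refine setIntegral_mono_on hd_int.abs.integrableOn
            (hg.integrableOn.const_mul _) measurableSet_Iic ?_
          intro x hx
          have hxa : x ≤ a := le_trans hx hs
          have hTxa : T a ≤ T x := hT_anti x a hxa
          have hTx : 0 < T x := hT x
          have hb : |g x - f x| * T x ≤ g x * q ^ n := by
            rw [hd_pt x]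
            exact mul_le_mul_of_nonneg_left (ih x hxa) (hg0 x)
          have : |g x - f x| * T a ≤ g x * q ^ n :=
            le_trans (mul_le_mul_of_nonneg_left hTxa (abs_nonneg _)) hb
          rw [div_mul_eq_mul_div, le_div_iff₀ hTa]
          linarith [this]
        have h3 : (∫ x in Iic s, (q ^ n / T a) * g x) = (q ^ n / T a) * U s := by
          rw [integral_const_mul]
        have h4' : (q ^ n / T a) * U s ≤ (q ^ n / T a) * U a :=
          mul_le_mul_of_nonneg_left (hU_mono s a hs) (div_nonneg (pow_nonneg hq0 n) hTa.le)
        have h5 : (q ^ n / T a) * U a = q ^ (n + 1) := by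
          rw [pow_succ, hqdef]
          field_simp
        linarith [h1, h2, h3 ▸ h4']
    have hlim : Tendsto (fun n : ℕ => q ^ n) atTop (𝓝 0) :=
      tendsto_pow_atTop_nhds_zero_of_lt_one hq0 hq1
    have : |ψ s| ≤ 0 := ge_of_tendsto' hlim fun n => hind n s hs
    exact abs_eq_zero.mp (le_antisymm this (abs_nonneg _))
  -- step case
  have hstep : ∀ a b : ℝ, a < b → (∀ s, s ≤ a → ψ s = 0) →
      (∫ x in Ioc a b, g x) < T b → ∀ s, s ≤ b → ψ s = 0 := by
    intro a b hab hza hq s hsb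
    rcases le_or_gt s a with hsa | hsa
    · exact hza s hsa
    -- s ∈ Ioc a b
    have hψ_Ioc : ∀ u, a < u → u ≤ b → ψ u = ∫ x in Ioc a u, (g x - f x) := by
      intro u hau hub
      have hsplit : (∫ x in Iic a, (g x - f x)) + (∫ x in Ioc a u, (g x - f x))
          = ∫ x in Iic u, (g x - f x) := by
        rw [← setIntegral_union (Iic_disjoint_Ioc le_rfl) measurableSet_Ioc
          hd_int.integrableOn hd_int.integrableOn, Iic_union_Ioc_eq_Iic hau.le]
      have hza' : (∫ x in Iic a, (g x - f x)) = 0 := by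
        rw [← hψ_Iic a]; exact hza a le_rfl
      rw [hψ_Iic u, ← hsplit, hza', zero_add]
    set V : ℝ := ∫ x in Ioc a b, g x with hVdef
    set q : ℝ := V / T b with hqdef
    have hTb := hT b
    have hVnn : 0 ≤ V := setIntegral_nonneg measurableSet_Ioc fun x _ => hg0 x
    have hq0 : 0 ≤ q := div_nonneg hVnn hTb.le
    have hq1 : q < 1 := (div_lt_one hTb).2 hq
    have hind : ∀ n : ℕ, ∀ u, a < u → u ≤ b → |ψ u| ≤ q ^ n := by
      intro n
      induction n with
      | zero => intro u _ _; simpa using hψ_abs u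
      | succ n ih =>
        intro u hau hub
        have h1 : |ψ u| ≤ ∫ x in Ioc a u, |g x - f x| := by
          rw [hψ_Ioc u hau hub]
          simpa [Real.norm_eq_abs] using
            norm_integral_le_integral_norm (μ := volume.restrict (Ioc a u)) (fun x => g x - f x)
        have h2 : ∫ x in Ioc a u, |g x - f x| ≤ ∫ x in Ioc a u, (q ^ n / T b) * g x := by
          refine setIntegral_mono_on hd_int.abs.integrableOn
            (hg.integrableOn.const_mul _) measurableSet_Ioc ?_
          intro x hx
          have hxb : x ≤ b := le_trans hx.2 hub
          have hTxb : T b ≤ T x := hT_anti x b hxb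
          have hb' : |g x - f x| * T x ≤ g x * q ^ n := by
            rw [hd_pt x]
            exact mul_le_mul_of_nonneg_left (ih x hx.1 hxb) (hg0 x)
          have : |g x - f x| * T b ≤ g x * q ^ n :=
            le_trans (mul_le_mul_of_nonneg_left hTxb (abs_nonneg _)) hb'
          rw [div_mul_eq_mul_div, le_div_iff₀ hTb]
          linarith [this]
        have h3 : (∫ x in Ioc a u, (q ^ n / T b) * g x) = (q ^ n / T b) * ∫ x in Ioc a u, g x := by
          rw [integral_const_mul]
        have h4' : (∫ x in Ioc a u, g x) ≤ V :=
          setIntegral_mono_set hg.integrableOn (ae_of_all _ hg0)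
            (HasSubset.Subset.eventuallyLE (Ioc_subset_Ioc_right hub))
        have h5 : (q ^ n / T b) * V = q ^ (n + 1) := by
          rw [pow_succ, hqdef]
          field_simp
        have h6 : (q ^ n / T b) * (∫ x in Ioc a u, g x) ≤ (q ^ n / T b) * V :=
          mul_le_mul_of_nonneg_left h4' (div_nonneg (pow_nonneg hq0 n) hTb.le)
        linarith [h1, h2, h3 ▸ h6]
    have hlim : Tendsto (fun n : ℕ => q ^ n) atTop (𝓝 0) :=
      tendsto_pow_atTop_nhds_zero_of_lt_one hq0 hq1
    have : |ψ s| ≤ 0 := ge_of_tendsto' hlim fun n => hind n s hsa hsb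
    exact abs_eq_zero.mp (le_antisymm this (abs_nonneg _))
  -- Z: set of points below which ψ vanishes
  set Z : Set ℝ := {a | ∀ s, s ≤ a → ψ s = 0} with hZdef
  -- Z is nonempty
  have hZne : Z.Nonempty := by
    have htend : Tendsto (fun n : ℕ => U (-(n : ℝ))) atTop (𝓝 0) := by
      have hmeas : ∀ n : ℕ, MeasurableSet (Iic (-(n : ℝ))) := fun n => measurableSet_Iic
      have hanti : Antitone fun n : ℕ => Iic (-(n : ℝ)) := fun m n hmn =>
        Iic_subset_Iic.2 (by exact_mod_cast neg_le_neg (by exact_mod_cast hmn))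
      have hint : ∃ n : ℕ, IntegrableOn g (Iic (-(n : ℝ))) := ⟨0, hg.integrableOn⟩
      have h := tendsto_setIntegral_of_antitone (f := g) (μ := volume) hmeas hanti hint
      have hempty : (⋂ n : ℕ, Iic (-(n : ℝ))) = ∅ := by
        ext x
        simp only [mem_iInter, mem_Iic, mem_empty_iff_false, iff_false, not_forall, not_le]
        obtain ⟨n, hn⟩ := exists_nat_gt (-x)
        exact ⟨n, by linarith⟩
      rw [hempty] at h
      simpa using h
    have hev : ∀ᶠ n : ℕ in atTop, U (-(n : ℝ)) < 1 / 2 := by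
      have := htend.eventually (eventually_lt_nhds (by norm_num : (0:ℝ) < 1/2))
      simpa using this
    obtain ⟨n, hn⟩ := hev.exists
    refine ⟨-(n : ℝ), hbase _ ?_⟩
    have := hsplitg (-(n : ℝ))
    linarith
  -- extension step via continuity
  have hUcont : Continuous U := by
    have hprim : Continuous fun b : ℝ => ∫ x in (0:ℝ)..b, g x := hg.continuous_primitive 0
    have hUeq : U = fun b : ℝ => (∫ x in Iic (0:ℝ), g x) + ∫ x in (0:ℝ)..b, g x := by
      funext b
      rw [← intervalIntegral.integral_Iic_sub_Iic hg.integrableOn hg.integrableOn]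
      simp only [hUdef]
      ring
    rw [hUeq]
    exact continuous_const.add hprim
  have hZsucc : ∀ a ∈ Z, ∃ b, a < b ∧ b ∈ Z := by
    intro a haZ
    have hT1 := hT (a + 1)
    have hev : ∀ᶠ b in 𝓝[>] a, U b < U a + T (a + 1) := by
      have hca : ContinuousAt U a := hUcont.continuousAt
      have := hca.eventually (eventually_lt_nhds (by linarith : U a < U a + T (a + 1)))
      exact this.filter_mono nhdsWithin_le_nhds
    have hev2 : ∀ᶠ b in 𝓝[>] a, b ∈ Ioc a (a + 1) :=
      Ioc_mem_nhdsGT_of_mem ⟨le_rfl, by linarith⟩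
    obtain ⟨b, hb1, hb2⟩ := (hev.and hev2).exists
    refine ⟨b, hb2.1, ?_⟩
    have hVlt : (∫ x in Ioc a b, g x) < T b := by
      have hsum : U a + (∫ x in Ioc a b, g x) = U b := by
        rw [hUdef]
        simp only
        rw [← setIntegral_union (Iic_disjoint_Ioc le_rfl) measurableSet_Ioc
          hg.integrableOn hg.integrableOn, Iic_union_Ioc_eq_Iic hb2.1.le]
      have hTab : T (a + 1) ≤ T b := hT_anti b (a + 1) hb2.2
      linarith
    exact hstep a b hb2.1 haZ hVlt
  -- conclude
  intro t
  have hψt : ψ t = 0 := by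
    by_cases hbd : ∃ a ∈ Z, t ≤ a
    · obtain ⟨a, haZ, hta⟩ := hbd
      exact haZ t hta
    · exfalso
      push_neg at hbd
      have hbdd : BddAbove Z := ⟨t, fun a ha => (hbd a ha).le⟩
      set m : ℝ := sSup Z with hmdef
      have hψcont : Continuous ψ := by
        have hScont : Continuous S := by
          have hprim : Continuous fun b : ℝ => ∫ x in (0:ℝ)..b, f x := hf.continuous_primitive 0
          have hSeq : S = fun b : ℝ => 1 - ((∫ x in Iic (0:ℝ), f x) + ∫ x in (0:ℝ)..b, f x) := by
            funext b
            have h1 := hsplitf b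
            rw [← intervalIntegral.integral_Iic_sub_Iic hf.integrableOn hf.integrableOn] at *
            simp only [hSdef] at *
            linarith
          rw [hSeq]
          exact continuous_const.sub (continuous_const.add hprim)
        have hTcont : Continuous T := by
          have hTeq : T = fun b : ℝ => 1 - U b := by
            funext b
            have := hsplitg b; linarith
          rw [hTeq]
          exact continuous_const.sub hUcont
        exact hScont.sub hTcont
      have hlt : ∀ s, s < m → ψ s = 0 := by
        intro s hsm'
        obtain ⟨a, haZ, hsa⟩ := exists_lt_of_lt_csSup hZne hsm'
        exact haZ s hsa.le
      have hm0 : ψ m = 0 := by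
        have h1 : Tendsto ψ (𝓝[<] m) (𝓝 (ψ m)) :=
          (hψcont.continuousAt.tendsto).mono_left nhdsWithin_le_nhds
        have h2 : Tendsto ψ (𝓝[<] m) (𝓝 0) := by
          refine Tendsto.congr' ?_ tendsto_const_nhds
          filter_upwards [self_mem_nhdsWithin] with x hx
          exact (hlt x hx).symm
        exact tendsto_nhds_unique h1 h2
      have hmZ : m ∈ Z := by
        intro s hsm
        rcases lt_or_eq_of_le hsm with hsm' | hsm'
        · exact hlt s hsm'
        · rw [hsm']; exact hm0
      obtain ⟨b, hmb, hbZ⟩ := hZsucc m hmZ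
      exact absurd (le_csSup hbdd hbZ) (not_le.2 hmb)
  have : S t - T t = 0 := hψt
  linarith

theorem stmt_4 (fX fC gX gC SX SC TX TC : ℝ → ℝ)
    (hfX_int : Integrable fX) (hfX_nonneg : ∀ x, 0 ≤ fX x) (hfX_one : ∫ x, fX x = 1)
    (hfC_int : Integrable fC) (hfC_nonneg : ∀ c, 0 ≤ fC c) (hfC_one : ∫ c, fC c = 1)
    (hgX_int : Integrable gX) (hgX_nonneg : ∀ x, 0 ≤ gX x) (hgX_one : ∫ x, gX x = 1)
    (hgC_int : Integrable gC) (hgC_nonneg : ∀ c, 0 ≤ gC c) (hgC_one : ∫ c, gC c = 1)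
    (hSX : ∀ t, SX t = ∫ x in Ioi t, fX x)
    (hSC : ∀ t, SC t = ∫ c in Ioi t, fC c)
    (hTX : ∀ t, TX t = ∫ x in Ioi t, gX x)
    (hTC : ∀ t, TC t = ∫ c in Ioi t, gC c)
    (hSX_pos : ∀ t, 0 < SX t) (hSC_pos : ∀ t, 0 < SC t)
    (hTX_pos : ∀ t, 0 < TX t) (hTC_pos : ∀ t, 0 < TC t)
    (h1 : ∀ x, fX x * SC x = gX x * TC x)
    (h2 : ∀ c, SX c * fC c = TX c * gC c)
    (h3 : ∀ t, SX t * SC t = TX t * TC t) :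
    (∀ x, fX x = gX x) ∧ (∀ c, fC c = gC c) := by
  -- hazard identities
  have h4X : ∀ x, fX x * TX x = gX x * SX x := by
    intro x
    have hc : SC x * TC x ≠ 0 := (mul_pos (hSC_pos x) (hTC_pos x)).ne'
    have key : (fX x * TX x) * (SC x * TC x) = (gX x * SX x) * (SC x * TC x) := by
      linear_combination (TX x * TC x) * h1 x - (gX x * TC x) * h3 x
    exact mul_right_cancel₀ hc key
  have h4C : ∀ c, fC c * TC c = gC c * SC c := by
    intro c
    have hc : SX c * TX c ≠ 0 := (mul_pos (hSX_pos c) (hTX_pos c)).ne'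
    have key : (fC c * TC c) * (SX c * TX c) = (gC c * SC c) * (SX c * TX c) := by
      linear_combination (TC c * TX c) * h2 c - (gC c * TX c) * h3 c
    exact mul_right_cancel₀ hc key
  have hX : ∀ t, (∫ x in Ioi t, fX x) = ∫ x in Ioi t, gX x := by
    refine censor_surv_eq fX gX hfX_int hfX_nonneg hfX_one hgX_int hgX_nonneg hgX_one
      (fun t => ?_) (fun x => ?_)
    · rw [← hTX t]; exact hTX_pos t
    · rw [← hTX x, ← hSX x]; exact h4X x
  have hC : ∀ t, (∫ x in Ioi t, fC x) = ∫ x in Ioi t, gC x := by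
    refine censor_surv_eq fC gC hfC_int hfC_nonneg hfC_one hgC_int hgC_nonneg hgC_one
      (fun t => ?_) (fun c => ?_)
    · rw [← hTC t]; exact hTC_pos t
    · rw [← hTC c, ← hSC c]; exact h4C c
  constructor
  · intro x
    have hST : SX x = TX x := by rw [hSX x, hTX x]; exact hX x
    have := h4X x
    rw [hST] at this
    exact mul_right_cancel₀ (hTX_pos x).ne' this
  · intro c
    have hST : SC c = TC c := by rw [hSC c, hTC c]; exact hC c
    have := h4C c
    rw [hST] at this
    exact mul_right_cancel₀ (hTC_pos c).ne' this
end

section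
/- Let X, C be independent random variables with densities η₁, η₂ on ℝ, both positive. Let a₁, a₂ : ℝ → ℝ be bounded measurable functions with E[a₁(X)] = 0 and E[a₂(C)] = 0. Define S₁ = Δ·a₁(W) + (1-Δ)·E[1{X > W} a₁(X) | W] / E[1{X > W} | W] and S₂ = Δ·E[1{C ≥ W} a₂(C) | W] / E[1{C ≥ W} | W] + (1-Δ)·a₂(W), where W = min(X,C) and Δ = 1{X ≤ C} (conditioning uses the relevant distribution of X or C only, with the observed value of W plugged in). Then E[S₁ · S₂] = 0. -/
open MeasureTheory Set

private lemma antitone_setIntegral {h : ℝ → ℝ} (hh : Integrable h) (hpos : ∀ u, 0 ≤ h u)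
    {s : ℝ → Set ℝ} (hs : Antitone s) : Antitone fun x => ∫ u in s x, h u := by
  intro x y hxy
  exact setIntegral_mono_set hh.integrableOn (Filter.Eventually.of_forall hpos)
    (HasSubset.Subset.eventuallyLE (hs hxy))

private lemma measurable_setIntegral {h : ℝ → ℝ} (hh : Integrable h)
    {s : ℝ → Set ℝ} (hs : Antitone s) : Measurable fun x => ∫ u in s x, h u := by
  have key : ∀ x, ∫ u in s x, h u =
      (∫ u in s x, max (h u) 0) - ∫ u in s x, max (-h u) 0 := by
    intro x
    rw [← integral_sub hh.pos_part.integrableOn hh.neg_part.integrableOn]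
    congr 1 with u
    exact (max_zero_sub_eq_self (h u)).symm
  simp only [key]
  exact ((antitone_setIntegral hh.pos_part (fun u => le_max_right _ _) hs).measurable).sub
    ((antitone_setIntegral hh.neg_part (fun u => le_max_right _ _) hs).measurable)

theorem stmt_5 (η₁ η₂ a₁ a₂ : ℝ → ℝ)
    (hη₁_int : Integrable η₁) (hη₁_pos : ∀ x, 0 < η₁ x) (hη₁_one : ∫ x, η₁ x = 1)
    (hη₂_int : Integrable η₂) (hη₂_pos : ∀ c, 0 < η₂ c) (hη₂_one : ∫ c, η₂ c = 1)
    (ha₁_meas : Measurable a₁) (ha₁_bdd : ∃ M, ∀ x, |a₁ x| ≤ M)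
    (ha₁_mean : ∫ x, a₁ x * η₁ x = 0)
    (ha₂_meas : Measurable a₂) (ha₂_bdd : ∃ M, ∀ c, |a₂ c| ≤ M)
    (ha₂_mean : ∫ c, a₂ c * η₂ c = 0)
    (hden₁ : ∀ w : ℝ, 0 < ∫ x in Ioi w, η₁ x)
    (hden₂ : ∀ w : ℝ, 0 < ∫ c in Ici w, η₂ c) :
    ∫ x, ∫ c,
      (if x ≤ c then
         a₁ x * ((∫ u in Ici x, a₂ u * η₂ u) / (∫ u in Ici x, η₂ u))
       else
         ((∫ u in Ioi c, a₁ u * η₁ u) / (∫ u in Ioi c, η₁ u)) * a₂ c)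
      * (η₁ x * η₂ c) = 0 := by
  obtain ⟨M₁, hM₁⟩ := ha₁_bdd
  obtain ⟨M₂, hM₂⟩ := ha₂_bdd
  have hM₁0 : 0 ≤ M₁ := le_trans (abs_nonneg _) (hM₁ 0)
  have hM₂0 : 0 ≤ M₂ := le_trans (abs_nonneg _) (hM₂ 0)
  set G₂ : ℝ → ℝ := fun x => ∫ u in Ici x, a₂ u * η₂ u with hG₂def
  set D₂ : ℝ → ℝ := fun x => ∫ u in Ici x, η₂ u with hD₂def
  set G₁ : ℝ → ℝ := fun c => ∫ u in Ioi c, a₁ u * η₁ u with hG₁def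
  set D₁ : ℝ → ℝ := fun c => ∫ u in Ioi c, η₁ u with hD₁def
  have hD₁pos : ∀ c, 0 < D₁ c := hden₁
  have hD₂pos : ∀ x, 0 < D₂ x := hden₂
  have hanti_Ici : Antitone (fun x : ℝ => Ici x) := fun x y h => Ici_subset_Ici.mpr h
  have hanti_Ioi : Antitone (fun x : ℝ => Ioi x) := fun x y h => Ioi_subset_Ioi h
  -- basic integrabilities
  have ia₁η₁ : Integrable (fun u => a₁ u * η₁ u) :=
    hη₁_int.bdd_mul ha₁_meas.aestronglyMeasurable
      (c := M₁) (Filter.Eventually.of_forall fun x => by rw [Real.norm_eq_abs]; exact hM₁ x)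
  have ia₂η₂ : Integrable (fun u => a₂ u * η₂ u) :=
    hη₂_int.bdd_mul ha₂_meas.aestronglyMeasurable
      (c := M₂) (Filter.Eventually.of_forall fun x => by rw [Real.norm_eq_abs]; exact hM₂ x)
  -- measurabilities
  have mG₂ : Measurable G₂ := measurable_setIntegral ia₂η₂ hanti_Ici
  have mD₂ : Measurable D₂ := measurable_setIntegral hη₂_int hanti_Ici
  have mG₁ : Measurable G₁ := measurable_setIntegral ia₁η₁ hanti_Ioi
  have mD₁ : Measurable D₁ := measurable_setIntegral hη₁_int hanti_Ioi
  have mg₂ : Measurable fun x => G₂ x / D₂ x := mG₂.div mD₂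
  have mg₁ : Measurable fun c => G₁ c / D₁ c := mG₁.div mD₁
  -- bounds
  have hG₂bd : ∀ x, |G₂ x| ≤ M₂ * D₂ x := by
    intro x
    have h1 : |G₂ x| ≤ ∫ u in Ici x, |a₂ u * η₂ u| :=
      norm_integral_le_integral_norm (μ := volume.restrict (Ici x)) (fun u => a₂ u * η₂ u)
    have h2 : ∫ u in Ici x, |a₂ u * η₂ u| ≤ ∫ u in Ici x, M₂ * η₂ u := by
      apply integral_mono ia₂η₂.abs.integrableOn ((hη₂_int.const_mul M₂).integrableOn)
      intro u
      dsimp only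
      rw [abs_mul, abs_of_pos (hη₂_pos u)]
      exact mul_le_mul_of_nonneg_right (hM₂ u) (hη₂_pos u).le
    calc |G₂ x| ≤ ∫ u in Ici x, M₂ * η₂ u := h1.trans h2
      _ = M₂ * D₂ x := integral_const_mul M₂ η₂
  have hG₁bd : ∀ c, |G₁ c| ≤ M₁ * D₁ c := by
    intro c
    have h1 : |G₁ c| ≤ ∫ u in Ioi c, |a₁ u * η₁ u| :=
      norm_integral_le_integral_norm (μ := volume.restrict (Ioi c)) (fun u => a₁ u * η₁ u)
    have h2 : ∫ u in Ioi c, |a₁ u * η₁ u| ≤ ∫ u in Ioi c, M₁ * η₁ u := by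
      apply integral_mono ia₁η₁.abs.integrableOn ((hη₁_int.const_mul M₁).integrableOn)
      intro u
      dsimp only
      rw [abs_mul, abs_of_pos (hη₁_pos u)]
      exact mul_le_mul_of_nonneg_right (hM₁ u) (hη₁_pos u).le
    calc |G₁ c| ≤ ∫ u in Ioi c, M₁ * η₁ u := h1.trans h2
      _ = M₁ * D₁ c := integral_const_mul M₁ η₁
  have hg₂bd : ∀ x, |G₂ x / D₂ x| ≤ M₂ := by
    intro x
    rw [abs_div, abs_of_pos (hD₂pos x), div_le_iff₀ (hD₂pos x)]
    exact hG₂bd x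
  have hg₁bd : ∀ c, |G₁ c / D₁ c| ≤ M₁ := by
    intro c
    rw [abs_div, abs_of_pos (hD₁pos c), div_le_iff₀ (hD₁pos c)]
    exact hG₁bd c
  have hD₂le : ∀ x, D₂ x ≤ 1 := by
    intro x
    rw [← hη₂_one]
    exact setIntegral_le_integral hη₂_int (Filter.Eventually.of_forall fun u => (hη₂_pos u).le)
  have hD₁le : ∀ c, D₁ c ≤ 1 := by
    intro c
    rw [← hη₁_one]
    exact setIntegral_le_integral hη₁_int (Filter.Eventually.of_forall fun u => (hη₁_pos u).le)
  have hG₂bd' : ∀ x, |G₂ x| ≤ M₂ := fun x =>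
    (hG₂bd x).trans (by nlinarith [hD₂le x, (hD₂pos x).le])
  -- the key integrable function g₁ · a₂ · η₂
  have ig₁a₂η₂ : Integrable fun c => G₁ c / D₁ c * a₂ c * η₂ c := by
    apply hη₂_int.bdd_mul (c := M₁ * M₂) (mg₁.mul ha₂_meas).aestronglyMeasurable
    refine Filter.Eventually.of_forall fun c => ?_
    rw [Real.norm_eq_abs, Pi.mul_apply, abs_mul]
    exact mul_le_mul (hg₁bd c) (hM₂ c) (abs_nonneg _) hM₁0
  -- J x = ∫_{c < x} g₁ a₂ η₂
  set J : ℝ → ℝ := fun x => ∫ c in Iio x, G₁ c / D₁ c * a₂ c * η₂ c with hJdef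
  have hJsplit : ∀ x, (∫ c in Ici x, G₁ c / D₁ c * a₂ c * η₂ c) + J x
      = ∫ c, G₁ c / D₁ c * a₂ c * η₂ c := by
    intro x
    have h := integral_add_compl (measurableSet_Ici (a := x)) ig₁a₂η₂
    rwa [compl_Ici] at h
  have mJ : Measurable J := by
    have : J = fun x => (∫ c, G₁ c / D₁ c * a₂ c * η₂ c)
        - ∫ c in Ici x, G₁ c / D₁ c * a₂ c * η₂ c := by
      funext x
      have := hJsplit x
      linarith
    rw [this]
    exact (measurable_setIntegral ig₁a₂η₂ hanti_Ici).const_sub _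
  have hJbd : ∀ x, |J x| ≤ M₁ * M₂ := by
    intro x
    have h1 : |J x| ≤ ∫ c in Iio x, |G₁ c / D₁ c * a₂ c * η₂ c| :=
      norm_integral_le_integral_norm (μ := volume.restrict (Iio x))
        (fun c => G₁ c / D₁ c * a₂ c * η₂ c)
    have h2 : ∫ c in Iio x, |G₁ c / D₁ c * a₂ c * η₂ c|
        ≤ ∫ c, |G₁ c / D₁ c * a₂ c * η₂ c| :=
      setIntegral_le_integral ig₁a₂η₂.abs
        (Filter.Eventually.of_forall fun c => abs_nonneg _)
    have h3 : ∫ c, |G₁ c / D₁ c * a₂ c * η₂ c| ≤ ∫ c, M₁ * M₂ * η₂ c := by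
      apply integral_mono ig₁a₂η₂.abs (hη₂_int.const_mul _)
      intro c
      dsimp only
      rw [abs_mul, abs_mul, abs_of_pos (hη₂_pos c)]
      exact mul_le_mul_of_nonneg_right
        (mul_le_mul (hg₁bd c) (hM₂ c) (abs_nonneg _) hM₁0) (hη₂_pos c).le
    have h4 : ∫ c, M₁ * M₂ * η₂ c = M₁ * M₂ := by
      rw [integral_const_mul, hη₂_one, mul_one]
    linarith
  -- Step A: compute the inner integral
  have hinner : ∀ x, (∫ c, (if x ≤ c then a₁ x * (G₂ x / D₂ x)
        else G₁ c / D₁ c * a₂ c) * (η₁ x * η₂ c))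
      = a₁ x * G₂ x * η₁ x + η₁ x * J x := by
    intro x
    have hq : Integrable fun c => (if x ≤ c then a₁ x * (G₂ x / D₂ x)
        else G₁ c / D₁ c * a₂ c) * (η₁ x * η₂ c) := by
      have h1 : Integrable fun c => ((if x ≤ c then a₁ x * (G₂ x / D₂ x)
          else G₁ c / D₁ c * a₂ c) * η₁ x) * η₂ c := by
        apply hη₂_int.bdd_mul (c := M₁ * M₂ * |η₁ x|)
        · exact (((measurable_const.ite measurableSet_Ici
            (mg₁.mul ha₂_meas))).mul_const (η₁ x)).aestronglyMeasurable
        · refine Filter.Eventually.of_forall fun c => ?_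
          rw [Real.norm_eq_abs, abs_mul]
          apply mul_le_mul_of_nonneg_right _ (abs_nonneg _)
          by_cases h : x ≤ c
          · rw [if_pos h, abs_mul]
            exact mul_le_mul (hM₁ x) (hg₂bd x) (abs_nonneg _) hM₁0
          · rw [if_neg h, abs_mul]
            exact mul_le_mul (hg₁bd c) (hM₂ c) (abs_nonneg _) hM₁0
      have h2 : (fun c => (if x ≤ c then a₁ x * (G₂ x / D₂ x)
          else G₁ c / D₁ c * a₂ c) * (η₁ x * η₂ c))
          = fun c => ((if x ≤ c then a₁ x * (G₂ x / D₂ x)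
          else G₁ c / D₁ c * a₂ c) * η₁ x) * η₂ c := by
        funext c; ring
      rw [h2]; exact h1
    rw [← integral_add_compl (measurableSet_Ici (a := x)) hq, compl_Ici]
    have hIci : (∫ c in Ici x, (if x ≤ c then a₁ x * (G₂ x / D₂ x)
        else G₁ c / D₁ c * a₂ c) * (η₁ x * η₂ c)) = a₁ x * G₂ x * η₁ x := by
      rw [setIntegral_congr_fun measurableSet_Ici
        (g := fun c => (a₁ x * (G₂ x / D₂ x) * η₁ x) * η₂ c)
        (fun c hc => by
          have h : x ≤ c := hc
          dsimp only
          rw [if_pos h]; ring)]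
      rw [integral_const_mul]
      have hD : D₂ x ≠ 0 := (hD₂pos x).ne'
      field_simp
      simp only [hD₂def]; ring
    have hIio : (∫ c in Iio x, (if x ≤ c then a₁ x * (G₂ x / D₂ x)
        else G₁ c / D₁ c * a₂ c) * (η₁ x * η₂ c)) = η₁ x * J x := by
      rw [setIntegral_congr_fun measurableSet_Iio
        (g := fun c => η₁ x * (G₁ c / D₁ c * a₂ c * η₂ c))
        (fun c hc => by
          have h : c < x := hc
          dsimp only
          rw [if_neg (not_le.mpr h)]; ring)]
      exact integral_const_mul (η₁ x) _
    rw [hIci, hIio]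
  -- integrabilities of the two outer terms
  have iA : Integrable fun x => a₁ x * G₂ x * η₁ x := by
    apply hη₁_int.bdd_mul (c := M₁ * M₂) (ha₁_meas.mul mG₂).aestronglyMeasurable
    refine Filter.Eventually.of_forall fun x => ?_
    rw [Real.norm_eq_abs, Pi.mul_apply, abs_mul]
    exact mul_le_mul (hM₁ x) (hG₂bd' x) (abs_nonneg _) hM₁0
  have iB : Integrable fun x => η₁ x * J x := by
    have h : Integrable fun x => J x * η₁ x := by
      apply hη₁_int.bdd_mul (c := M₁ * M₂) mJ.aestronglyMeasurable
      exact Filter.Eventually.of_forall (fun x => by rw [Real.norm_eq_abs]; exact hJbd x)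
    have : (fun x => η₁ x * J x) = fun x => J x * η₁ x := funext fun x => mul_comm _ _
    rw [this]; exact h
  -- rewrite the whole double integral
  have step1 : (∫ x, ∫ c,
      (if x ≤ c then a₁ x * (G₂ x / D₂ x) else G₁ c / D₁ c * a₂ c) * (η₁ x * η₂ c))
      = (∫ x, a₁ x * G₂ x * η₁ x) + ∫ x, η₁ x * J x := by
    rw [integral_congr_ae (Filter.Eventually.of_forall hinner)]
    exact integral_add iA iB
  -- Fubini 1
  have hIic : ∀ u, ∫ x in Iic u, a₁ x * η₁ x = -G₁ u := by
    intro u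
    have h := integral_add_compl (measurableSet_Iic (a := u)) ia₁η₁
    rw [compl_Iic, ha₁_mean] at h
    linarith
  have e1 : (∫ x, a₁ x * G₂ x * η₁ x) = -∫ c, a₂ c * η₂ c * G₁ c := by
    set k : ℝ → ℝ → ℝ := fun x u => if x ≤ u then (a₁ x * η₁ x) * (a₂ u * η₂ u) else 0
      with hkdef
    have hk_int : Integrable (Function.uncurry k) (volume.prod volume) := by
      have base : Integrable (fun p : ℝ × ℝ => (a₁ p.1 * η₁ p.1) * (a₂ p.2 * η₂ p.2))
          (volume.prod volume) := ia₁η₁.mul_prod ia₂η₂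
      have : Function.uncurry k = ({p : ℝ × ℝ | p.1 ≤ p.2}).indicator
          (fun p => (a₁ p.1 * η₁ p.1) * (a₂ p.2 * η₂ p.2)) := by
        funext p
        rfl
      rw [this]
      exact base.indicator (measurableSet_le measurable_fst measurable_snd)
    have lhs_eq : ∀ x, a₁ x * G₂ x * η₁ x = ∫ u, k x u := by
      intro x
      have h1 : (∫ u, k x u) = ∫ u in Ici x, (a₁ x * η₁ x) * (a₂ u * η₂ u) := by
        rw [← integral_indicator measurableSet_Ici]
        rfl
      rw [h1, integral_const_mul]
      ring
    have rhs_eq : ∀ u, (∫ x, k x u) = a₂ u * η₂ u * ∫ x in Iic u, a₁ x * η₁ x := by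
      intro u
      have h1 : (∫ x, k x u) = ∫ x in Iic u, (a₁ x * η₁ x) * (a₂ u * η₂ u) := by
        rw [← integral_indicator measurableSet_Iic]
        rfl
      rw [h1, integral_mul_const]
      ring
    calc (∫ x, a₁ x * G₂ x * η₁ x) = ∫ x, ∫ u, k x u := by simp only [lhs_eq]
      _ = ∫ u, ∫ x, k x u := integral_integral_swap hk_int
      _ = ∫ u, a₂ u * η₂ u * ∫ x in Iic u, a₁ x * η₁ x := by simp only [rhs_eq]
      _ = ∫ u, a₂ u * η₂ u * (-G₁ u) := by simp only [hIic]
      _ = -∫ c, a₂ c * η₂ c * G₁ c := by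
          rw [← integral_neg]
          congr 1
          funext u
          ring
  -- Fubini 2
  have e2 : (∫ x, η₁ x * J x) = ∫ c, a₂ c * η₂ c * G₁ c := by
    set m : ℝ → ℝ → ℝ := fun x c => if c < x then η₁ x * (G₁ c / D₁ c * a₂ c * η₂ c) else 0
      with hmdef
    have hm_int : Integrable (Function.uncurry m) (volume.prod volume) := by
      have base : Integrable (fun p : ℝ × ℝ => η₁ p.1 * (G₁ p.2 / D₁ p.2 * a₂ p.2 * η₂ p.2))
          (volume.prod volume) := hη₁_int.mul_prod ig₁a₂η₂
      have : Function.uncurry m = ({p : ℝ × ℝ | p.2 < p.1}).indicator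
          (fun p => η₁ p.1 * (G₁ p.2 / D₁ p.2 * a₂ p.2 * η₂ p.2)) := by
        funext p
        rfl
      rw [this]
      exact base.indicator (measurableSet_lt measurable_snd measurable_fst)
    have lhs_eq : ∀ x, η₁ x * J x = ∫ c, m x c := by
      intro x
      have h1 : (∫ c, m x c) = ∫ c in Iio x, η₁ x * (G₁ c / D₁ c * a₂ c * η₂ c) := by
        rw [← integral_indicator measurableSet_Iio]
        rfl
      rw [h1, integral_const_mul]
    have rhs_eq : ∀ c, (∫ x, m x c) = D₁ c * (G₁ c / D₁ c * a₂ c * η₂ c) := by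
      intro c
      have h1 : (∫ x, m x c) = ∫ x in Ioi c, η₁ x * (G₁ c / D₁ c * a₂ c * η₂ c) := by
        rw [← integral_indicator measurableSet_Ioi]
        rfl
      rw [h1, integral_mul_const]
    have key : ∀ c, D₁ c * (G₁ c / D₁ c * a₂ c * η₂ c) = a₂ c * η₂ c * G₁ c := by
      intro c
      have : D₁ c ≠ 0 := (hD₁pos c).ne'
      field_simp
    calc (∫ x, η₁ x * J x) = ∫ x, ∫ c, m x c := by simp only [lhs_eq]
      _ = ∫ c, ∫ x, m x c := integral_integral_swap hm_int
      _ = ∫ c, D₁ c * (G₁ c / D₁ c * a₂ c * η₂ c) := by simp only [rhs_eq]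
      _ = ∫ c, a₂ c * η₂ c * G₁ c := by simp only [key]
  rw [step1, e1, e2]
  exact neg_add_cancel _
end

section
/- Let X, C be independent with densities η₁, η₂, W = min(X,C), Δ = 1{X ≤ C}. Suppose g₁, g₀ : ℝ → ℝ are bounded measurable and satisfy, for almost every x, ∫ [1{x ≤ c} g₁(x) + 1{x > c} g₀(c)] η₂(c) dc = 0. Then E[Δ g₁(W) + (1-Δ) g₀(W)] = 0. -/
open MeasureTheory Set

theorem stmt_10 (η₁ η₂ g₁ g₀ : ℝ → ℝ)
    (hη₁_int : Integrable η₁) (hη₁_nonneg : ∀ x, 0 ≤ η₁ x) (hη₁_one : ∫ x, η₁ x = 1)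
    (hη₂_int : Integrable η₂) (hη₂_nonneg : ∀ c, 0 ≤ η₂ c) (hη₂_one : ∫ c, η₂ c = 1)
    (hg₁_meas : Measurable g₁) (hg₁_bdd : ∃ M, ∀ w, |g₁ w| ≤ M)
    (hg₀_meas : Measurable g₀) (hg₀_bdd : ∃ M, ∀ w, |g₀ w| ≤ M)
    (hcond : ∀ᵐ x ∂volume, ∫ c, (if x ≤ c then g₁ x else g₀ c) * η₂ c = 0) :
    ∫ c, ∫ x, (if x ≤ c then g₁ x else g₀ c) * (η₁ x * η₂ c) = 0 := by
  obtain ⟨M₁, hM₁⟩ := hg₁_bdd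
  obtain ⟨M₀, hM₀⟩ := hg₀_bdd
  have hfmeas : Measurable (fun p : ℝ × ℝ => if p.2 ≤ p.1 then g₁ p.2 else g₀ p.1) := by
    exact Measurable.ite (measurableSet_le measurable_snd measurable_fst)
      (hg₁_meas.comp measurable_snd) (hg₀_meas.comp measurable_fst)
  have hηint : Integrable (fun p : ℝ × ℝ => η₁ p.2 * η₂ p.1)
      (volume.prod volume) := by
    have := hη₂_int.mul_prod hη₁_int
    simpa [mul_comm] using this
  have hFint : Integrable
      (fun p : ℝ × ℝ => (if p.2 ≤ p.1 then g₁ p.2 else g₀ p.1) * (η₁ p.2 * η₂ p.1))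
      (volume.prod volume) := by
    apply hηint.bdd_mul (c := max M₁ M₀) hfmeas.aestronglyMeasurable
    refine Filter.Eventually.of_forall (fun p => ?_)
    by_cases h : p.2 ≤ p.1 <;> simp only [h, if_true, if_false, Real.norm_eq_abs]
    · exact le_max_of_le_left (hM₁ _)
    · exact le_max_of_le_right (hM₀ _)
  have hswap := integral_integral_swap (μ := (volume : Measure ℝ)) (ν := volume)
    (f := fun c x => (if x ≤ c then g₁ x else g₀ c) * (η₁ x * η₂ c)) hFint
  rw [hswap]
  have : ∀ᵐ x ∂(volume : Measure ℝ),
      (∫ c, (if x ≤ c then g₁ x else g₀ c) * (η₁ x * η₂ c)) = 0 := by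
    filter_upwards [hcond] with x hx
    have : (fun c => (if x ≤ c then g₁ x else g₀ c) * (η₁ x * η₂ c))
        = fun c => η₁ x * ((if x ≤ c then g₁ x else g₀ c) * η₂ c) := by
      funext c; ring
    rw [this, integral_const_mul, hx, mul_zero]
  rw [integral_congr_ae this, integral_zero]
end

section
/- Let μ and ν be probability measures on ℝ with positive densities η₁, η₂. Suppose b : ℝ × {0,1} → ℝ is bounded measurable and satisfies: for ν-almost-every x, ∫ [1{x ≤ c} b(x, 1) + 1{x > c} b(c, 0)] η₂(c) dc = 0 (conditional mean zero given X = x under the censoring distribution). Then, with X ~ η₁ and C ~ η₂ independent, W = min(X,C), Δ = 1{X ≤ C}, we have E[b(W, Δ)] = 0. -/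
open MeasureTheory Set

theorem stmt_12 (η₁ η₂ : ℝ → ℝ) (b : ℝ → Bool → ℝ)
    (hη₁_int : Integrable η₁) (hη₁_pos : ∀ x, 0 < η₁ x) (hη₁_one : ∫ x, η₁ x = 1)
    (hη₂_int : Integrable η₂) (hη₂_pos : ∀ c, 0 < η₂ c) (hη₂_one : ∫ c, η₂ c = 1)
    (hb_meas : ∀ δ, Measurable (fun w => b w δ))
    (hb_bdd : ∃ M, ∀ w δ, |b w δ| ≤ M)
    (hcond : ∀ᵐ x ∂volume,
      ∫ c, (if x ≤ c then b x true else b c false) * η₂ c = 0) :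
    ∫ c, ∫ x, (if x ≤ c then b x true else b c false) * (η₁ x * η₂ c) = 0 := by
  obtain ⟨M, hM⟩ := hb_bdd
  have hMnn : 0 ≤ M := le_trans (abs_nonneg _) (hM 0 true)
  -- the dominating function on the product space (p = (c, x))
  have hdom : Integrable (fun p : ℝ × ℝ => η₂ p.1 * η₁ p.2)
      ((volume : Measure ℝ).prod volume) := hη₂_int.mul_prod hη₁_int
  -- measurability of the if-part
  have hifm : Measurable fun p : ℝ × ℝ =>
      (if p.2 ≤ p.1 then b p.2 true else b p.1 false) :=
    Measurable.ite (measurableSet_le measurable_snd measurable_fst)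
      ((hb_meas true).comp measurable_snd) ((hb_meas false).comp measurable_fst)
  have hFsm : AEStronglyMeasurable
      (fun p : ℝ × ℝ => (if p.2 ≤ p.1 then b p.2 true else b p.1 false) * (η₁ p.2 * η₂ p.1))
      ((volume : Measure ℝ).prod volume) := by
    refine hifm.aestronglyMeasurable.mul ?_
    have := hdom.aestronglyMeasurable
    simpa [mul_comm] using this
  have hFint : Integrable
      (fun p : ℝ × ℝ => (if p.2 ≤ p.1 then b p.2 true else b p.1 false) * (η₁ p.2 * η₂ p.1))
      ((volume : Measure ℝ).prod volume) := by
    refine (hdom.const_mul M).mono' hFsm ?_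
    filter_upwards with p
    have h1 : 0 ≤ η₁ p.2 := (hη₁_pos _).le
    have h2 : 0 ≤ η₂ p.1 := (hη₂_pos _).le
    have hb : |(if p.2 ≤ p.1 then b p.2 true else b p.1 false)| ≤ M := by
      split <;> exact hM _ _
    calc ‖(if p.2 ≤ p.1 then b p.2 true else b p.1 false) * (η₁ p.2 * η₂ p.1)‖
        = |(if p.2 ≤ p.1 then b p.2 true else b p.1 false)| * (η₁ p.2 * η₂ p.1) := by
          rw [Real.norm_eq_abs, abs_mul, abs_of_nonneg (mul_nonneg h1 h2)]
      _ ≤ M * (η₁ p.2 * η₂ p.1) := by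
          exact mul_le_mul_of_nonneg_right hb (mul_nonneg h1 h2)
      _ = M * (η₂ p.1 * η₁ p.2) := by ring
  -- swap the order of integration
  rw [MeasureTheory.integral_integral_swap hFint]
  -- now the outer variable is x, inner is c
  have : ∀ᵐ x ∂(volume : Measure ℝ),
      (∫ c, (if x ≤ c then b x true else b c false) * (η₁ x * η₂ c)) = 0 := by
    filter_upwards [hcond] with x hx
    have : (∫ c, (if x ≤ c then b x true else b c false) * (η₁ x * η₂ c))
        = η₁ x * ∫ c, (if x ≤ c then b x true else b c false) * η₂ c := by
      rw [← MeasureTheory.integral_const_mul]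
      congr 1; ext c; ring
    rw [this, hx, mul_zero]
  calc (∫ x, ∫ c, (if x ≤ c then b x true else b c false) * (η₁ x * η₂ c))
      = ∫ (_ : ℝ), (0 : ℝ) := integral_congr_ae this
    _ = 0 := integral_zero _ _
end

section
/- Let f : ℝ → ℝ be a positive density and g : ℝ → ℝ bounded measurable with ∫ g(x) f(x) dx = 0. Define for each w the 'censored conditional mean' m(w) = [∫_w^∞ g(x) f(x) dx] / [∫_w^∞ f(x) dx], assuming ∫_w^∞ f(x) dx > 0 for all w. Then for any density h on ℝ: ∫ g(w) f(w) [∫_w^∞ h(c) dc] dw + ∫ m(w) [∫_w^∞ f(x) dx] h(w) dw = 0. -/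
open MeasureTheory Set

theorem stmt_13 (f g h : ℝ → ℝ)
    (hf_int : Integrable f) (hf_pos : ∀ x, 0 < f x) (hf_one : ∫ x, f x = 1)
    (hg_meas : Measurable g) (hg_bdd : ∃ M, ∀ x, |g x| ≤ M)
    (hg_mean : ∫ x, g x * f x = 0)
    (hsurv : ∀ w : ℝ, 0 < ∫ x in Ioi w, f x)
    (hh_int : Integrable h) (hh_nonneg : ∀ c, 0 ≤ h c) (hh_one : ∫ c, h c = 1) :
    (∫ w, g w * f w * (∫ c in Ioi w, h c))
      + (∫ w, ((∫ x in Ioi w, g x * f x) / (∫ x in Ioi w, f x))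
          * (∫ x in Ioi w, f x) * h w) = 0 := by
  obtain ⟨M, hM⟩ := hg_bdd
  -- integrability of g * f
  have hgf : Integrable (fun x => g x * f x) := by
    refine hf_int.bdd_mul (c := M) hg_meas.aestronglyMeasurable (Filter.Eventually.of_forall fun x => ?_)
    simpa using hM x
  -- key: ∫ over Ioi w = - ∫ over Iio w
  have hzero : ∀ w : ℝ, (∫ x in Ioi w, g x * f x) = -∫ x in Iio w, g x * f x := by
    intro w
    have h1 : (∫ x in Iic w, g x * f x) + (∫ x in Ioi w, g x * f x) = ∫ x, g x * f x :=
      intervalIntegral.integral_Iic_add_Ioi hgf.integrableOn hgf.integrableOn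
    rw [hg_mean, integral_Iic_eq_integral_Iio] at h1
    linarith
  -- Fubini on the first term
  set K : ℝ × ℝ → ℝ := fun p => g p.1 * f p.1 * (Ioi p.1).indicator h p.2 with hK
  have hKeq : K = {p : ℝ × ℝ | p.1 < p.2}.indicator (fun p => g p.1 * f p.1 * h p.2) := by
    funext p
    by_cases hp : p.1 < p.2
    · simp [hK, indicator_of_mem, hp, Set.mem_Ioi, Set.mem_setOf_eq]
    · simp [hK, indicator_of_notMem, hp, Set.mem_Ioi, Set.mem_setOf_eq]
  have hset : MeasurableSet {p : ℝ × ℝ | p.1 < p.2} :=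
    measurableSet_lt measurable_fst measurable_snd
  have hbig : Integrable (fun p : ℝ × ℝ => g p.1 * (f p.1 * h p.2))
      (volume.prod volume) := by
    refine (hf_int.mul_prod hh_int).bdd_mul
      (c := M) (hg_meas.comp measurable_fst).aestronglyMeasurable (Filter.Eventually.of_forall fun p => ?_)
    simpa using hM p.1
  have hKind : Integrable ({p : ℝ × ℝ | p.1 < p.2}.indicator
      (fun p => g p.1 * f p.1 * h p.2)) (volume.prod volume) := by
    refine Integrable.mono' (hbig.norm) ?_ ?_
    · exact ((hbig.aestronglyMeasurable).congr (by
        filter_upwards with p using by ring)).indicator hset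
    · filter_upwards with p
      by_cases hp : p ∈ {p : ℝ × ℝ | p.1 < p.2}
      · rw [indicator_of_mem hp]
        simp [abs_mul, mul_assoc]
      · rw [indicator_of_notMem hp]
        simp only [norm_zero, norm_mul, Real.norm_eq_abs]
        positivity
  have hKint : Integrable K (volume.prod volume) := hKeq.symm ▸ hKind
  have hterm1 : (∫ w, g w * f w * (∫ c in Ioi w, h c))
      = ∫ c, (∫ w in Iio c, g w * f w) * h c := by
    have step1 : (∫ w, g w * f w * (∫ c in Ioi w, h c))
        = ∫ w, ∫ c, K (w, c) := by
      refine integral_congr_ae (Filter.Eventually.of_forall fun w => ?_)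
      dsimp only
      rw [← integral_indicator measurableSet_Ioi, ← integral_const_mul]
    have step2 : (∫ w, ∫ c, K (w, c)) = ∫ c, ∫ w, K (w, c) :=
      integral_integral_swap hKint
    rw [step1, step2]
    refine integral_congr_ae (Filter.Eventually.of_forall fun c => ?_)
    dsimp only
    have : (fun w => K (w, c))
        = (Iio c).indicator (fun w => g w * f w * h c) := by
      funext w
      by_cases hw : w < c
      · simp [hK, indicator_of_mem, hw, Set.mem_Ioi, Set.mem_Iio]
      · simp [hK, indicator_of_notMem, hw, Set.mem_Ioi, Set.mem_Iio]
    rw [this, integral_indicator measurableSet_Iio, integral_mul_const]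
  -- simplify second term
  have hterm2 : (∫ w, ((∫ x in Ioi w, g x * f x) / (∫ x in Ioi w, f x))
      * (∫ x in Ioi w, f x) * h w)
      = ∫ w, -((∫ x in Iio w, g x * f x) * h w) := by
    refine integral_congr_ae (Filter.Eventually.of_forall fun w => ?_)
    dsimp only
    rw [div_mul_cancel₀ _ (hsurv w).ne', hzero w]
    ring
  rw [hterm1, hterm2, integral_neg]
  ring
end

section
/- Let X, C be independent with positive densities η₁, η₂ and suppose Y is a random variable with conditional density f_{Y|X}(y, x) given X = x, with C independent of (Y, X). Let s : ℝ × ℝ → ℝ be bounded measurable with ∫ s(y, x) f_{Y|X}(y, x) dy = 0 for all x (a conditional score). Define the observed-data score S(y, w, δ) = δ·s(y, w) + (1-δ)·[∫ 1{x > w} s(y, x) f_{Y|X}(y,x) η₁(x) dx] / [∫ 1{x > w} f_{Y|X}(y,x) η₁(x) dx], where W = min(X, C), Δ = 1{X ≤ C}. Then E[S(Y, W, Δ)] = 0. -/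
open MeasureTheory Set

/-- Auxiliary: a.e.-strong measurability of a parametrized set integral. -/
private lemma aesm_param {h : ℝ → ℝ} (hh : AEStronglyMeasurable h (volume : Measure ℝ))
    {R : ℝ → Set ℝ} (hR : MeasurableSet {p : ℝ × ℝ | p.2 ∈ R p.1})
    (hR' : ∀ c, MeasurableSet (R c)) :
    AEStronglyMeasurable (fun c => ∫ u in R c, h u) (volume : Measure ℝ) := by
  have hF : AEStronglyMeasurable ({p : ℝ × ℝ | p.2 ∈ R p.1}.indicator (fun p => h p.2))
      ((volume : Measure ℝ).prod volume) :=
    (hh.comp_quasiMeasurePreserving Measure.quasiMeasurePreserving_snd).indicator hR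
  refine hF.integral_prod_right'.congr (Filter.Eventually.of_forall fun c => ?_)
  have : (fun u => ({p : ℝ × ℝ | p.2 ∈ R p.1}.indicator (fun p => h p.2)) (c, u))
      = (R c).indicator h := by
    funext u
    by_cases hu : u ∈ R c <;> simp [Set.indicator, hu]
  simp only []
  rw [this, integral_indicator (hR' c)]
theorem stmt_15 (η₁ η₂ : ℝ → ℝ) (fYX s : ℝ → ℝ → ℝ)
    (hη₁_int : Integrable η₁) (hη₁_pos : ∀ x, 0 < η₁ x) (hη₁_one : ∫ x, η₁ x = 1)
    (hη₂_int : Integrable η₂) (hη₂_pos : ∀ c, 0 < η₂ c) (hη₂_one : ∫ c, η₂ c = 1)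
    (hf_meas : Measurable (Function.uncurry fYX)) (hf_nonneg : ∀ y x, 0 ≤ fYX y x)
    (hf_one : ∀ x, ∫ y, fYX y x = 1)
    (hs_meas : Measurable (Function.uncurry s)) (hs_bdd : ∃ M, ∀ y x, |s y x| ≤ M)
    (hs_score : ∀ x, ∫ y, s y x * fYX y x = 0)
    (hden_pos : ∀ y w : ℝ, 0 < ∫ x in Ioi w, fYX y x * η₁ x) :
    ∫ y, ∫ x, ∫ c,
      (if x ≤ c then s y x
       else (∫ u in Ioi c, s y u * fYX y u * η₁ u) / (∫ u in Ioi c, fYX y u * η₁ u))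
      * (fYX y x * η₁ x * η₂ c) = 0 := by
  obtain ⟨M, hM⟩ := hs_bdd
  have hM0 : (0:ℝ) ≤ M := le_trans (abs_nonneg _) (hM 0 0)
  -- measurability basics
  have hη₁m : AEStronglyMeasurable η₁ (volume : Measure ℝ) := hη₁_int.1
  have hη₂m : AEStronglyMeasurable η₂ (volume : Measure ℝ) := hη₂_int.1
  -- H (y,x) = fYX y x * η₁ x is integrable on the product
  have hHm : AEStronglyMeasurable (fun p : ℝ × ℝ => fYX p.1 p.2 * η₁ p.2)
      ((volume : Measure ℝ).prod volume) :=
    hf_meas.aestronglyMeasurable.mul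
      (hη₁m.comp_quasiMeasurePreserving Measure.quasiMeasurePreserving_snd)
  have hfy_int : ∀ x, Integrable (fun y => fYX y x) (volume : Measure ℝ) :=
    fun x => integrable_of_integral_eq_one (hf_one x)
  have hH_int : Integrable (fun p : ℝ × ℝ => fYX p.1 p.2 * η₁ p.2)
      ((volume : Measure ℝ).prod volume) := by
    rw [integrable_prod_iff' hHm]
    constructor
    · exact Filter.Eventually.of_forall fun x => (hfy_int x).mul_const (η₁ x)
    · have : (fun x => ∫ y, ‖fYX y x * η₁ x‖) = η₁ := by
        funext x
        have h1 : ∀ y, ‖fYX y x * η₁ x‖ = fYX y x * η₁ x := fun y => by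
          rw [Real.norm_eq_abs, abs_of_nonneg (mul_nonneg (hf_nonneg y x) (hη₁_pos x).le)]
        simp only [h1, integral_mul_const, hf_one x, one_mul]
      rw [this]; exact hη₁_int
  -- K (y,x) = s y x * fYX y x * η₁ x is integrable on the product
  have habsK : ∀ y x, |s y x * fYX y x * η₁ x| ≤ M * (fYX y x * η₁ x) := by
    intro y x
    rw [abs_mul, abs_mul, abs_of_nonneg (hf_nonneg y x), abs_of_nonneg (hη₁_pos x).le, mul_assoc]
    exact mul_le_mul_of_nonneg_right (hM y x)
      (mul_nonneg (hf_nonneg y x) (hη₁_pos x).le)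
  have hKm : AEStronglyMeasurable (fun p : ℝ × ℝ => s p.1 p.2 * fYX p.1 p.2 * η₁ p.2)
      ((volume : Measure ℝ).prod volume) :=
    (hs_meas.mul hf_meas).aestronglyMeasurable.mul
      (hη₁m.comp_quasiMeasurePreserving Measure.quasiMeasurePreserving_snd)
  have hK_int : Integrable (fun p : ℝ × ℝ => s p.1 p.2 * fYX p.1 p.2 * η₁ p.2)
      ((volume : Measure ℝ).prod volume) := by
    refine (hH_int.const_mul M).mono' hKm (Filter.Eventually.of_forall fun p => ?_)
    exact habsK p.1 p.2
  -- the key pointwise (in y) identity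
  have key : ∀ᵐ y : ℝ, (∫ x, ∫ c,
      (if x ≤ c then s y x
       else (∫ u in Ioi c, s y u * fYX y u * η₁ u) / (∫ u in Ioi c, fYX y u * η₁ u))
      * (fYX y x * η₁ x * η₂ c)) = ∫ x, s y x * fYX y x * η₁ x := by
    filter_upwards [hH_int.prod_right_ae] with y hφ
    -- notation
    set φ : ℝ → ℝ := fun x => fYX y x * η₁ x with hφdef
    have hφ_nn : ∀ x, 0 ≤ φ x := fun x => mul_nonneg (hf_nonneg y x) (hη₁_pos x).le
    have hsy_m : Measurable fun x => s y x := hs_meas.comp measurable_prodMk_left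
    have hfy_m : Measurable fun x => fYX y x := hf_meas.comp measurable_prodMk_left
    have hφm : AEStronglyMeasurable φ (volume : Measure ℝ) := hφ.1
    have hbd : ∀ u, |s y u * fYX y u * η₁ u| ≤ M * φ u := fun u => habsK y u
    have hsφm : AEStronglyMeasurable (fun u => s y u * fYX y u * η₁ u) (volume : Measure ℝ) :=
      (hsy_m.mul hfy_m).aestronglyMeasurable.mul hη₁m
    have hsφ_int : Integrable (fun u => s y u * fYX y u * η₁ u) (volume : Measure ℝ) :=
      (hφ.const_mul M).mono' hsφm (Filter.Eventually.of_forall hbd)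
    set num : ℝ → ℝ := fun c => ∫ u in Ioi c, s y u * fYX y u * η₁ u with hnumdef
    set den : ℝ → ℝ := fun c => ∫ u in Ioi c, fYX y u * η₁ u with hdendef
    have hden_pos' : ∀ c, 0 < den c := fun c => hden_pos y c
    have hden_ne : ∀ c, den c ≠ 0 := fun c => (hden_pos' c).ne'
    have hnum_le : ∀ c, |num c| ≤ M * den c := by
      intro c
      calc |num c| ≤ ∫ u in Ioi c, |s y u * fYX y u * η₁ u| := by
            simpa only [Real.norm_eq_abs] using
              norm_integral_le_integral_norm (μ := volume.restrict (Ioi c))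
                (fun u => s y u * fYX y u * η₁ u)
        _ ≤ ∫ u in Ioi c, M * φ u :=
            integral_mono (hsφ_int.integrableOn.abs) ((hφ.integrableOn).const_mul M) hbd
        _ = M * den c := by rw [integral_const_mul]
    have hg_bd : ∀ c, |num c / den c| ≤ M := by
      intro c
      rw [abs_div, abs_of_pos (hden_pos' c), div_le_iff₀ (hden_pos' c)]
      simpa [mul_comm] using hnum_le c
    -- measurability of num, den and of the η₂ tails
    have hden_m : AEStronglyMeasurable den (volume : Measure ℝ) :=
      aesm_param hφm (measurableSet_lt measurable_fst measurable_snd)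
        (fun c => measurableSet_Ioi)
    have hnum_m : AEStronglyMeasurable num (volume : Measure ℝ) :=
      aesm_param hsφm (measurableSet_lt measurable_fst measurable_snd)
        (fun c => measurableSet_Ioi)
    have hT_m : AEStronglyMeasurable (fun x => ∫ c in Ici x, η₂ c) (volume : Measure ℝ) :=
      aesm_param hη₂m (measurableSet_le measurable_fst measurable_snd)
        (fun c => measurableSet_Ici)
    have hT'_m : AEStronglyMeasurable (fun x => ∫ c in Iio x, η₂ c) (volume : Measure ℝ) :=
      aesm_param hη₂m (measurableSet_lt measurable_snd measurable_fst)
        (fun c => measurableSet_Iio)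
    have hT_bd : ∀ (S : Set ℝ), |∫ c in S, η₂ c| ≤ 1 := by
      intro S
      rw [abs_of_nonneg (integral_nonneg fun c => (hη₂_pos c).le), ← hη₂_one]
      exact setIntegral_le_integral hη₂_int (Filter.Eventually.of_forall fun c => (hη₂_pos c).le)
    -- the dominating function on the product
    have hD_int : Integrable (fun p : ℝ × ℝ => φ p.1 * η₂ p.2)
        ((volume : Measure ℝ).prod volume) := hφ.mul_prod hη₂_int
    have hD_nn : ∀ p : ℝ × ℝ, 0 ≤ φ p.1 * η₂ p.2 :=
      fun p => mul_nonneg (hφ_nn p.1) (hη₂_pos p.2).le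
    have hDm : AEStronglyMeasurable (fun p : ℝ × ℝ => φ p.1 * η₂ p.2)
        ((volume : Measure ℝ).prod volume) :=
      (hφm.comp_quasiMeasurePreserving Measure.quasiMeasurePreserving_fst).mul
        (hη₂m.comp_quasiMeasurePreserving Measure.quasiMeasurePreserving_snd)
    -- the two pieces
    set A : Set (ℝ × ℝ) := {p : ℝ × ℝ | p.1 ≤ p.2} with hAdef
    have hA_ms : MeasurableSet A := measurableSet_le measurable_fst measurable_snd
    set F2A : ℝ × ℝ → ℝ := A.indicator (fun p => s y p.1 * (φ p.1 * η₂ p.2)) with hF2Adef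
    set F2B : ℝ × ℝ → ℝ := Aᶜ.indicator (fun p => (num p.2 / den p.2) * (φ p.1 * η₂ p.2))
      with hF2Bdef
    have hF2A_int : Integrable F2A ((volume : Measure ℝ).prod volume) := by
      refine (hD_int.const_mul M).mono'
        (((hsy_m.comp measurable_fst).aestronglyMeasurable.mul hDm).indicator hA_ms)
        (Filter.Eventually.of_forall fun p => ?_)
      rw [hF2Adef, Real.norm_eq_abs]
      by_cases hp : p ∈ A
      · rw [Set.indicator_of_mem hp, abs_mul, abs_of_nonneg (hD_nn p)]
        exact mul_le_mul_of_nonneg_right (hM y p.1) (hD_nn p)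
      · rw [Set.indicator_of_notMem hp, abs_zero]
        exact mul_nonneg hM0 (hD_nn p)
    have hF2B_int : Integrable F2B ((volume : Measure ℝ).prod volume) := by
      refine (hD_int.const_mul M).mono'
        (((((hnum_m.aemeasurable.div hden_m.aemeasurable).aestronglyMeasurable).comp_quasiMeasurePreserving
            Measure.quasiMeasurePreserving_snd).mul hDm).indicator hA_ms.compl)
        (Filter.Eventually.of_forall fun p => ?_)
      rw [hF2Bdef, Real.norm_eq_abs]
      by_cases hp : p ∈ Aᶜ
      · rw [Set.indicator_of_mem hp, abs_mul, abs_of_nonneg (hD_nn p)]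
        exact mul_le_mul_of_nonneg_right (hg_bd p.2) (hD_nn p)
      · rw [Set.indicator_of_notMem hp, abs_zero]
        exact mul_nonneg hM0 (hD_nn p)
    have hsplit : ∀ p : ℝ × ℝ,
        (if p.1 ≤ p.2 then s y p.1 else num p.2 / den p.2) * (φ p.1 * η₂ p.2)
          = F2A p + F2B p := by
      intro p
      by_cases hp : p.1 ≤ p.2
      · have hp' : p ∈ A := hp
        simp [hF2Adef, hF2Bdef, Set.indicator_of_mem hp',
          Set.indicator_of_notMem (by simpa using hp' : p ∉ Aᶜ), hp]
      · have hp' : p ∉ A := hp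
        simp [hF2Adef, hF2Bdef, Set.indicator_of_notMem hp',
          Set.indicator_of_mem (by simpa using hp' : p ∈ Aᶜ), hp]
    have hF2_int : Integrable (fun p : ℝ × ℝ =>
        (if p.1 ≤ p.2 then s y p.1 else num p.2 / den p.2) * (φ p.1 * η₂ p.2))
        ((volume : Measure ℝ).prod volume) :=
      (hF2A_int.add hF2B_int).congr (Filter.Eventually.of_forall fun p => (hsplit p).symm)
    -- Step 1: double integral equals product integral and splits
    have step1 : (∫ x, ∫ c,
        (if x ≤ c then s y x else num c / den c) * (φ x * η₂ c))
        = (∫ p : ℝ × ℝ, F2A p ∂((volume : Measure ℝ).prod volume)) + (∫ p : ℝ × ℝ, F2B p ∂((volume : Measure ℝ).prod volume)) := by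
      rw [MeasureTheory.integral_integral hF2_int,
        integral_congr_ae (Filter.Eventually.of_forall hsplit),
        integral_add hF2A_int hF2B_int]
    -- Step 2: the A part
    have stepA : (∫ p : ℝ × ℝ, F2A p ∂((volume : Measure ℝ).prod volume))
        = ∫ x, (s y x * fYX y x * η₁ x) * (∫ c in Ici x, η₂ c) := by
      rw [MeasureTheory.integral_prod _ hF2A_int]
      refine integral_congr_ae (Filter.Eventually.of_forall fun x => ?_)
      simp only []
      have h1 : (fun c => F2A (x, c)) = (Ici x).indicator (fun c => s y x * (φ x * η₂ c)) := by
        funext c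
        by_cases hc : x ≤ c
        · rw [hF2Adef, Set.indicator_of_mem (show (x,c) ∈ A from hc),
            Set.indicator_of_mem (show c ∈ Ici x from hc)]
        · rw [hF2Adef, Set.indicator_of_notMem (show (x,c) ∉ A from hc),
            Set.indicator_of_notMem (show c ∉ Ici x from hc)]
      rw [h1, integral_indicator measurableSet_Ici]
      have h2 : ∀ c, s y x * (φ x * η₂ c) = (s y x * fYX y x * η₁ x) * η₂ c := fun c => by
        rw [hφdef]; ring
      simp only [h2]
      rw [integral_const_mul]
    -- Step 3: the B part, first swap
    have stepB1 : (∫ p : ℝ × ℝ, F2B p ∂((volume : Measure ℝ).prod volume)) = ∫ c, η₂ c * num c := by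
      rw [MeasureTheory.integral_prod_symm _ hF2B_int]
      refine integral_congr_ae (Filter.Eventually.of_forall fun c => ?_)
      simp only []
      have h1 : (fun x => F2B (x, c))
          = (Ioi c).indicator (fun x => (num c / den c) * (φ x * η₂ c)) := by
        funext x
        by_cases hx : c < x
        · rw [hF2Bdef, Set.indicator_of_mem (show (x,c) ∈ Aᶜ from not_le.mpr hx),
            Set.indicator_of_mem (show x ∈ Ioi c from hx)]
        · rw [hF2Bdef,
            Set.indicator_of_notMem (show (x,c) ∉ Aᶜ by simpa [hAdef] using not_lt.mp hx),
            Set.indicator_of_notMem (show x ∉ Ioi c from hx)]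
      rw [h1, integral_indicator measurableSet_Ioi]
      have h2 : ∀ x, (num c / den c) * (φ x * η₂ c)
          = (num c / den c * η₂ c) * (fYX y x * η₁ x) := fun x => by rw [hφdef]; ring
      simp only [h2]
      rw [integral_const_mul]
      show num c / den c * η₂ c * den c = η₂ c * num c
      field_simp [hden_ne c]
    -- Step 4: the B part, second swap
    set J : ℝ × ℝ → ℝ :=
      {p : ℝ × ℝ | p.1 < p.2}.indicator
        (fun p => η₂ p.1 * (s y p.2 * fYX y p.2 * η₁ p.2)) with hJdef
    have hLt_ms : MeasurableSet {p : ℝ × ℝ | p.1 < p.2} :=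
      measurableSet_lt measurable_fst measurable_snd
    have hJ_int : Integrable J ((volume : Measure ℝ).prod volume) := by
      refine (hη₂_int.mul_prod (hφ.const_mul M)).mono'
        (((hη₂m.comp_quasiMeasurePreserving Measure.quasiMeasurePreserving_fst).mul
          (hsφm.comp_quasiMeasurePreserving Measure.quasiMeasurePreserving_snd)).indicator
          hLt_ms)
        (Filter.Eventually.of_forall fun p => ?_)
      rw [hJdef, Real.norm_eq_abs]
      by_cases hp : p ∈ {p : ℝ × ℝ | p.1 < p.2}
      · rw [Set.indicator_of_mem hp, abs_mul, abs_of_nonneg (hη₂_pos p.1).le]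
        exact mul_le_mul_of_nonneg_left (hbd p.2) (hη₂_pos p.1).le
      · rw [Set.indicator_of_notMem hp, abs_zero]
        exact mul_nonneg (hη₂_pos p.1).le (mul_nonneg hM0 (hφ_nn p.2))
    have stepB2 : (∫ c, η₂ c * num c) = ∫ p : ℝ × ℝ, J p ∂((volume : Measure ℝ).prod volume) := by
      rw [MeasureTheory.integral_prod _ hJ_int]
      refine integral_congr_ae (Filter.Eventually.of_forall fun c => ?_)
      have h1 : (fun u => J (c, u))
          = (Ioi c).indicator (fun u => η₂ c * (s y u * fYX y u * η₁ u)) := by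
        funext u
        by_cases hu : c < u
        · rw [hJdef, Set.indicator_of_mem (show (c,u) ∈ {p : ℝ × ℝ | p.1 < p.2} from hu),
            Set.indicator_of_mem (show u ∈ Ioi c from hu)]
        · rw [hJdef,
            Set.indicator_of_notMem (show (c,u) ∉ {p : ℝ × ℝ | p.1 < p.2} from hu),
            Set.indicator_of_notMem (show u ∉ Ioi c from hu)]
      show η₂ c * num c = ∫ u, J (c, u)
      rw [h1, integral_indicator measurableSet_Ioi, integral_const_mul, hnumdef]
    have stepB3 : (∫ p : ℝ × ℝ, J p ∂((volume : Measure ℝ).prod volume))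
        = ∫ x, (s y x * fYX y x * η₁ x) * (∫ c in Iio x, η₂ c) := by
      rw [MeasureTheory.integral_prod_symm _ hJ_int]
      refine integral_congr_ae (Filter.Eventually.of_forall fun u => ?_)
      have h1 : (fun c => J (c, u))
          = (Iio u).indicator (fun c => η₂ c * (s y u * fYX y u * η₁ u)) := by
        funext c
        by_cases hc : c < u
        · rw [hJdef, Set.indicator_of_mem (show (c,u) ∈ {p : ℝ × ℝ | p.1 < p.2} from hc),
            Set.indicator_of_mem (show c ∈ Iio u from hc)]
        · rw [hJdef,
            Set.indicator_of_notMem (show (c,u) ∉ {p : ℝ × ℝ | p.1 < p.2} from hc),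
            Set.indicator_of_notMem (show c ∉ Iio u from hc)]
      show (∫ c, J (c, u)) = (s y u * fYX y u * η₁ u) * ∫ c in Iio u, η₂ c
      rw [h1, integral_indicator measurableSet_Iio, integral_mul_const, mul_comm]
    -- Step 5: combine
    have hIA_int : Integrable (fun x => (s y x * fYX y x * η₁ x) * (∫ c in Ici x, η₂ c))
        (volume : Measure ℝ) := by
      refine (hφ.const_mul M).mono' (hsφm.mul hT_m)
        (Filter.Eventually.of_forall fun x => ?_)
      rw [Real.norm_eq_abs, abs_mul]
      calc |s y x * fYX y x * η₁ x| * |∫ c in Ici x, η₂ c|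
          ≤ (M * φ x) * 1 := mul_le_mul (hbd x) (hT_bd _) (abs_nonneg _)
            (mul_nonneg hM0 (hφ_nn x))
        _ = M * φ x := mul_one _
    have hIB_int : Integrable (fun x => (s y x * fYX y x * η₁ x) * (∫ c in Iio x, η₂ c))
        (volume : Measure ℝ) := by
      refine (hφ.const_mul M).mono' (hsφm.mul hT'_m)
        (Filter.Eventually.of_forall fun x => ?_)
      rw [Real.norm_eq_abs, abs_mul]
      calc |s y x * fYX y x * η₁ x| * |∫ c in Iio x, η₂ c|
          ≤ (M * φ x) * 1 := mul_le_mul (hbd x) (hT_bd _) (abs_nonneg _)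
            (mul_nonneg hM0 (hφ_nn x))
        _ = M * φ x := mul_one _
    have hTT : ∀ x : ℝ, (∫ c in Ici x, η₂ c) + (∫ c in Iio x, η₂ c) = 1 := by
      intro x
      rw [add_comm, intervalIntegral.integral_Iio_add_Ici hη₂_int.integrableOn hη₂_int.integrableOn, hη₂_one]
    calc (∫ x, ∫ c, (if x ≤ c then s y x else num c / den c) * (φ x * η₂ c))
        = (∫ p : ℝ × ℝ, F2A p ∂((volume : Measure ℝ).prod volume)) + (∫ p : ℝ × ℝ, F2B p ∂((volume : Measure ℝ).prod volume)) := step1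
      _ = (∫ x, (s y x * fYX y x * η₁ x) * (∫ c in Ici x, η₂ c))
            + ∫ x, (s y x * fYX y x * η₁ x) * (∫ c in Iio x, η₂ c) := by
          rw [stepA, stepB1, stepB2, stepB3]
      _ = ∫ x, ((s y x * fYX y x * η₁ x) * (∫ c in Ici x, η₂ c)
            + (s y x * fYX y x * η₁ x) * (∫ c in Iio x, η₂ c)) :=
          (integral_add hIA_int hIB_int).symm
      _ = ∫ x, s y x * fYX y x * η₁ x := by
          refine integral_congr_ae (Filter.Eventually.of_forall fun x => ?_)
          simp only []
          rw [← mul_add, hTT x, mul_one]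
  -- conclude
  rw [integral_congr_ae key,
    MeasureTheory.integral_integral_swap
      (f := fun y x => s y x * fYX y x * η₁ x) hK_int]
  have : ∀ x : ℝ, (∫ y, s y x * fYX y x * η₁ x) = 0 := fun x => by
    rw [integral_mul_const, hs_score x, zero_mul]
  simp only [this, integral_zero]
end
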